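/- arXiv:2203.07787 — 2 statements merged into one kernel-verified Lean document; each statement's English description precedes it below -/
import Mathlib

section
/- Define the character χ^s/χ of K^× by (χ^s/χ)(x) = χ(s(x))·χ(x)^{-1}. Then χ^s/χ factors through the norm (i.e. there exists a character θ of F^× with (χ^s/χ)(x) = θ(Nm_{K|F}(x)) for all x) if and only if χ^s/χ is quadratic, i.e. (χ(s(x))·χ(x)^{-1})² = 1 for all x ∈ K^×. -/
noncomputable instance : RootableBy ℂˣ ℕ :=
  rootableByOfPowLeftSurj _ _ (fun {n} hn x => by
    obtain ⟨z, hz⟩ := IsAlgClosed.exists_pow_nat_eq (x : ℂ) (Nat.pos_of_ne_zero hn)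
    have hz0 : z ≠ 0 := by
      rintro rfl
      exact x.ne_zero (by simpa [hn] using hz.symm)
    exact ⟨Units.mk0 z hz0, Units.ext (by simpa using hz)⟩)

noncomputable instance : RootableBy ℂˣ ℤ := Group.rootableByIntOfRootableByNat ℂˣ

noncomputable instance (A : Type*) [Group A] [RootableBy A ℤ] : DivisibleBy (Additive A) ℤ where
  div a n := Additive.ofMul (RootableBy.root a.toMul n)
  div_zero a := congrArg Additive.ofMul (RootableBy.root_zero _)
  div_cancel a hn := Additive.toMul.injective (by
    rw [toMul_zsmul]
    exact RootableBy.root_cancel a.toMul hn)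

lemma char_extend {G : Type u} [CommGroup G] (H : Subgroup G) (f : ↥H →* ℂˣ) :
    ∃ g : G →* ℂˣ, ∀ h : ↥H, g ↑h = f h := by
  have baer : Module.Baer ℤ (Additive (ULift.{u} ℂˣ)) := Module.Baer.of_divisible _
  have inj := baer.injective
  set ι : Additive ↥H →ₗ[ℤ] Additive G :=
    (MonoidHom.toAdditive H.subtype).toIntLinearMap
  have hι : Function.Injective ι := fun a b hab => Subtype.ext hab
  set f' : Additive ↥H →ₗ[ℤ] Additive (ULift.{u} ℂˣ) :=
    (MonoidHom.toAdditive ((MulEquiv.ulift.symm.toMonoidHom).comp f)).toIntLinearMap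
  obtain ⟨h, hh⟩ := inj.out ι hι f'
  refine ⟨(MulEquiv.ulift.toMonoidHom.comp (AddMonoidHom.toMultiplicative h.toAddMonoidHom)), ?_⟩
  intro x
  have h1 : h (Additive.ofMul (x : G)) = Additive.ofMul (MulEquiv.ulift.symm (f x)) := by
    simpa [ι, f'] using hh (Additive.ofMul x)
  show MulEquiv.ulift (Additive.toMul (h (Additive.ofMul (x : G)))) = f x
  rw [h1]
  simp

/-- `F ⊆ K` Galois of degree 2 with nontrivial automorphism `s` and norm
map `ν : Kˣ →* Fˣ` (`ν x = x · s x`).  For a character `χ : Kˣ →* ℂˣ`, the character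
`χ^s/χ : x ↦ χ(s x)·χ(x)⁻¹` factors through the norm iff it is quadratic, i.e.
`(χ(s x)·χ(x)⁻¹)² = 1` for all `x ∈ Kˣ`. -/
theorem stmt_3 {F K : Type*} [Field F] [Field K] [Algebra F K] [IsGalois F K]
    (h2 : Module.finrank F K = 2)
    (s : K ≃ₐ[F] K) (hs : s ≠ AlgEquiv.refl)
    (ν : Kˣ →* Fˣ)
    (hν : ∀ x : Kˣ, (algebraMap F K (ν x) : K) = (x : K) * s (x : K))
    (χ : Kˣ →* ℂˣ) :
    (∃ θ : Fˣ →* ℂˣ, ∀ x : Kˣ,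
        χ (Units.map (s : K →* K) x) * (χ x)⁻¹ = θ (ν x)) ↔
      (∀ x : Kˣ, (χ (Units.map (s : K →* K) x) * (χ x)⁻¹) ^ 2 = 1) := by
  classical
  have hfd : FiniteDimensional F K := FiniteDimensional.of_finrank_pos (by omega)
  have hcard : Fintype.card (K ≃ₐ[F] K) = 2 := by
    rw [← Nat.card_eq_fintype_card, IsGalois.card_aut_eq_finrank, h2]
  have hs1 : s ≠ 1 := hs
  have hss : s * s = 1 := by
    have := pow_card_eq_one (x := s)
    rwa [hcard, pow_two] at this
  have hsx : ∀ x : K, s (s x) = x := fun x => by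
    rw [← AlgEquiv.mul_apply, hss]; rfl
  have hmapmap : ∀ x : Kˣ, Units.map (s : K →* K) (Units.map (s : K →* K) x) = x :=
    fun x => Units.ext (by simp [hsx])
  have hν_map : ∀ x : Kˣ, ν (Units.map (s : K →* K) x) = ν x := fun x => by
    have inj := (algebraMap F K).injective
    apply Units.ext
    apply inj
    rw [hν, hν x]
    show (s x : K) * s (s (x : K)) = _
    rw [hsx, mul_comm]
  constructor
  · rintro ⟨θ, hθ⟩ x
    have e1 := hθ (Units.map (s : K →* K) x)
    rw [hν_map, hmapmap] at e1
    have h := e1.trans (hθ x).symm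
    have key : (χ (Units.map (s : K →* K) x) * (χ x)⁻¹) ^ 2
        = (χ (Units.map (s : K →* K) x) * (χ x)⁻¹) * (χ x * (χ (Units.map (s : K →* K) x))⁻¹) := by
      rw [h, pow_two]
    rw [key]
    group
  · intro hq
    set δ : Kˣ →* ℂˣ := (χ.comp (Units.map (s : K →* K))) * χ⁻¹ with hδ
    have hδx : ∀ x, δ x = χ (Units.map (s : K →* K) x) * (χ x)⁻¹ := fun x => rfl
    have htwo : ∀ g : K ≃ₐ[F] K, g = 1 ∨ g = s := by
      intro g
      by_contra hg
      push_neg at hg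
      have h3 : ({1, s, g} : Finset (K ≃ₐ[F] K)).card = 3 := by
        rw [Finset.card_insert_of_notMem (by simp [hs1.symm, (hg.1).symm]),
          Finset.card_insert_of_notMem (by simp [Ne.symm hg.2]), Finset.card_singleton]
      have hle := Finset.card_le_univ ({1, s, g} : Finset (K ≃ₐ[F] K))
      rw [h3, hcard] at hle
      omega
    have hker : ν.ker ≤ δ.ker := by
      intro x hx
      rw [MonoidHom.mem_ker] at hx
      have hx1 : (x : K) * s (x : K) = 1 := by
        have h1 := hν x
        rw [hx] at h1
        simpa using h1.symm
      set f : (K ≃ₐ[F] K) → Kˣ := fun g => if g = 1 then 1 else x with hf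
      have keyu : Units.map (s : K →* K) x * x = 1 := Units.ext (by
        simpa [mul_comm] using hx1)
      have hcoc : groupCohomology.IsMulCocycle₁ f := by
        intro g h
        rcases htwo g with rfl | rfl <;> rcases htwo h with rfl | rfl <;>
          simp [hf, hs1, hss, AlgEquiv.smul_units_def, keyu]
      obtain ⟨β, hβ⟩ := groupCohomology.isMulCoboundary₁_of_isMulCocycle₁_of_aut_to_units f hcoc
      have hx2 : x = Units.map (s : K →* K) β * β⁻¹ := by
        have hb := hβ s
        rw [AlgEquiv.smul_units_def] at hb
        simp only [hf, if_neg hs1] at hb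
        rw [← hb, div_eq_mul_inv]
      have hmap : δ (Units.map (s : K →* K) β) = (δ β)⁻¹ := by
        rw [hδx, hδx, hmapmap, mul_inv, inv_inv, mul_comm]
      have hsq : (δ β) ^ 2 = 1 := by rw [hδx]; exact hq β
      rw [MonoidHom.mem_ker, hx2, map_mul, map_inv, hmap, ← mul_inv, ← pow_two, hsq, inv_one]
    set δbar := QuotientGroup.lift ν.ker δ hker with hδbar
    set e := QuotientGroup.quotientKerEquivRange ν with he
    obtain ⟨θ, hθ⟩ := char_extend ν.range (δbar.comp e.symm.toMonoidHom)
    refine ⟨θ, fun x => ?_⟩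
    have hmem : ν x ∈ ν.range := ⟨x, rfl⟩
    have h1 : θ (ν x) = δbar (e.symm ⟨ν x, hmem⟩) := hθ ⟨ν x, hmem⟩
    have h2' : (⟨ν x, hmem⟩ : ν.range) = e (QuotientGroup.mk x) := rfl
    rw [h1, h2', MulEquiv.symm_apply_apply]
    exact (hδx x).symm
end

section
/- Let k ≥ 7 be an integer. The set U_k := { N(x) mod 2^{⌈k/2⌉} : x ∈ ℤ[√2] whose class modulo (√2)^k is a unit } is a subgroup of (ℤ/2^{⌈k/2⌉}ℤ)^×; it is the internal direct product of the cyclic subgroup generated by the class of −1, which has order 2, and the cyclic subgroup generated by the class of −9, which has order 2^{⌊(k−5)/2⌋}; in particular U_k is isomorphic to ℤ/2ℤ × ℤ/2^{⌊(k−5)/2⌋}ℤ. -/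
open Subgroup

lemma aux81 (t : ℕ) : ∃ c : ℤ, Odd c ∧ (81:ℤ)^(2^t) = 1 + 2^(t+4)*c := by
  induction t with
  | zero => exact ⟨5, ⟨2, by norm_num⟩, by norm_num⟩
  | succ n ih =>
    obtain ⟨c, ⟨j, hj⟩, h⟩ := ih
    refine ⟨c + 2^(n+3)*c^2, ⟨j + 2^(n+2)*c^2, by rw [hj]; ring⟩, ?_⟩
    have h2 : (81:ℤ)^(2^(n+1)) = ((81:ℤ)^(2^n))^2 := by
      rw [← pow_mul, pow_succ]
    rw [h2, h]; ring

lemma isCyclic_zpowers {G : Type*} [Group G] (g : G) : IsCyclic (Subgroup.zpowers g) := by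
  refine ⟨⟨⟨g, Subgroup.mem_zpowers g⟩, ?_⟩⟩
  rintro ⟨x, hx⟩
  obtain ⟨n, rfl⟩ := hx
  exact ⟨n, Subtype.ext (by simp)⟩

lemma norm_pow' (x : ℤ√2) (n : ℕ) : (x^n).norm = x.norm^n :=
  map_pow Zsqrtd.normMonoidHom x n

lemma cast2m_zero (m : ℕ) : ((2:ZMod (2^m)))^m = 0 := by
  have := ZMod.natCast_self (2^m)
  push_cast at this
  exact this

lemma neg_nine_pow (m : ℕ) (hm : 4 ≤ m) : (-9 : ZMod (2^m))^(2^(m-3)) = 1 := by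
  obtain ⟨c, -, h⟩ := aux81 (m-4)
  have e : (2:ℕ)^(m-3) = 2*2^(m-4) := by
    rw [← pow_succ']; congr 1; omega
  rw [e, pow_mul]
  have e9 : ((-9 : ZMod (2^m)))^2 = ((81:ℤ) : ZMod (2^m)) := by push_cast; ring
  rw [e9, ← Int.cast_pow, h]
  have hm4 : m - 4 + 4 = m := by omega
  rw [hm4]
  push_cast
  rw [cast2m_zero]
  ring

lemma neg_nine_pow_ne (m : ℕ) (hm : 4 ≤ m) : (-9 : ZMod (2^m))^(2^(m-4)) ≠ 1 := by
  rcases eq_or_lt_of_le hm with h4 | h5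
  · subst h4
    norm_num
    decide
  · obtain ⟨c, hc, h⟩ := aux81 (m-5)
    have e : (2:ℕ)^(m-4) = 2*2^(m-5) := by rw [← pow_succ']; congr 1; omega
    rw [e, pow_mul]
    have e9 : ((-9 : ZMod (2^m)))^2 = ((81:ℤ) : ZMod (2^m)) := by push_cast; ring
    rw [e9, ← Int.cast_pow, h]
    have hm5 : m - 5 + 4 = m - 1 := by omega
    rw [hm5]
    intro hcon
    have h0 : ((2^(m-1)*c : ℤ) : ZMod (2^m)) = 0 := by
      have : ((1 + 2^(m-1)*c : ℤ) : ZMod (2^m)) = ((1:ℤ) : ZMod (2^m)) := by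
        exact_mod_cast hcon
      have := sub_eq_zero.mpr this
      rw [← Int.cast_sub] at this
      simpa using this
    rw [ZMod.intCast_zmod_eq_zero_iff_dvd] at h0
    push_cast at h0
    have h2 : (2:ℤ)^m = 2^(m-1)*2 := by rw [← pow_succ]; congr 1; omega
    rw [h2] at h0
    have hpos : (0:ℤ) < 2^(m-1) := by positivity
    have : (2:ℤ) ∣ c := by
      rcases h0 with ⟨e', he'⟩
      refine ⟨e', mul_left_cancel₀ (ne_of_gt hpos) ?_⟩
      rw [he']; ring
    rcases hc with ⟨j, hj⟩
    omega

def gunit (m : ℕ) : (ZMod (2^m))ˣ :=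
  -(ZMod.unitOfCoprime 9 (Nat.Coprime.pow_right m (by norm_num)))

lemma gunit_val (m : ℕ) : ((gunit m) : ZMod (2^m)) = -9 := by
  simp [gunit]

lemma orderOf_gunit (m : ℕ) (hm : 4 ≤ m) : orderOf (gunit m) = 2^(m-3) := by
  have h1 : (gunit m)^(2^(m-3)) = 1 := by
    ext
    rw [Units.val_pow_eq_pow_val, gunit_val, neg_nine_pow m hm, Units.val_one]
  have h2 : (gunit m)^(2^(m-4)) ≠ 1 := by
    intro hcon
    apply neg_nine_pow_ne m hm
    rw [← gunit_val m, ← Units.val_pow_eq_pow_val, hcon, Units.val_one]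
  have hdvd := orderOf_dvd_of_pow_eq_one h1
  obtain ⟨s, hs, heq⟩ := (Nat.dvd_prime_pow Nat.prime_two).1 hdvd
  rcases Nat.lt_or_ge s (m-3) with hlt | hge
  · exfalso
    apply h2
    apply orderOf_dvd_iff_pow_eq_one.1
    rw [heq]
    exact pow_dvd_pow 2 (by omega)
  · rw [heq]; congr 1; omega

lemma orderOf_negone (m : ℕ) (hm : 4 ≤ m) : orderOf (-1 : (ZMod (2^m))ˣ) = 2 := by
  have h2 : (2:ℕ) < 2^m := by
    calc (2:ℕ) < 2^4 := by norm_num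
    _ ≤ 2^m := Nat.pow_le_pow_right (by norm_num) hm
  haveI : Fact (2 < 2^m) := ⟨h2⟩
  refine orderOf_eq_prime ?_ ?_
  · ext; simp
  · intro hcon
    have := congrArg Units.val hcon
    rw [Units.val_neg, Units.val_one] at this
    exact ZMod.neg_one_ne_one this

lemma inter_bot (m : ℕ) (hm : 4 ≤ m) :
    zpowers (-1 : (ZMod (2^m))ˣ) ⊓ zpowers (gunit m) = ⊥ := by
  rw [eq_bot_iff]
  intro x hx
  rw [Subgroup.mem_inf] at hx
  obtain ⟨h1, h2⟩ := hx
  rw [mem_zpowers_iff] at h1 h2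
  obtain ⟨n, hn⟩ := h1
  have h12 : (-1 : (ZMod (2^m))ˣ)^(2:ℤ) = 1 := by
    rw [zpow_two]; simp
  have hx : x = 1 ∨ x = -1 := by
    rcases Int.even_or_odd n with ⟨a, ha⟩ | ⟨a, ha⟩
    · left; rw [← hn, ha, ← two_mul, zpow_mul, h12, one_zpow]
    · right; rw [← hn, ha, zpow_add, zpow_mul, h12, one_zpow, one_mul, zpow_one]
  rcases hx with rfl | rfl
  · exact mem_bot.mpr rfl
  · exfalso
    obtain ⟨t, ht⟩ := h2
    let φ := ZMod.unitsMap (pow_dvd_pow 2 hm : 2^4 ∣ 2^m)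
    have hφ := congrArg φ ht
    rw [map_zpow] at hφ
    set w := φ (gunit m) with hwdef
    have hw : (w : ZMod (2^4)) = -9 := by
      have h9 : ((gunit m : (ZMod (2^m))ˣ) : ZMod (2^m)) = ((-9:ℤ) : ZMod (2^m)) := by
        rw [gunit_val]; push_cast; ring
      have hrfl : (w : ZMod (2^4))
          = ZMod.castHom (pow_dvd_pow 2 hm) (ZMod (2^4)) (gunit m : ZMod (2^m)) := rfl
      rw [hrfl, h9, map_intCast]
      push_cast; ring
    have hφn : ((φ (-1) : (ZMod (2^4))ˣ) : ZMod (2^4)) = -1 := by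
      simp [φ, ZMod.unitsMap_def]
    have hw2 : w^(2:ℤ) = 1 := by
      have : w^(2:ℕ) = 1 := by
        ext
        rw [Units.val_pow_eq_pow_val, hw]
        decide
      rw [show (2:ℤ) = ((2:ℕ):ℤ) by norm_num, zpow_natCast, this]
    rcases Int.even_or_odd t with ⟨a, ha⟩ | ⟨a, ha⟩
    · rw [ha, ← two_mul, zpow_mul, hw2, one_zpow] at hφ
      have := congrArg Units.val hφ
      rw [Units.val_one, hφn] at this
      revert this; decide
    · rw [ha, zpow_add, zpow_mul, hw2, one_zpow, one_mul, zpow_one] at hφ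
      have := congrArg Units.val hφ
      rw [hw, hφn] at this
      revert this; decide

lemma card_units_zmod (m : ℕ) (hm : 1 ≤ m) : Nat.card (ZMod (2^m))ˣ = 2^(m-1) := by
  haveI : NeZero ((2:ℕ)^m) := ⟨by positivity⟩
  rw [Nat.card_eq_fintype_card, ZMod.card_units_eq_totient,
    Nat.totient_prime_pow Nat.prime_two (by omega)]
  simp

def jhom (m : ℕ) :
    ((zpowers (-1 : (ZMod (2^m))ˣ)) × (zpowers (gunit m))) →* (ZMod (2^m))ˣ :=
  MonoidHom.coprod (Subgroup.subtype _) (Subgroup.subtype _)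

lemma jhom_inj (m : ℕ) (hm : 4 ≤ m) : Function.Injective (jhom m) := by
  rw [injective_iff_map_eq_one]
  rintro ⟨h, k⟩ hhk
  have h1 : (h : (ZMod (2^m))ˣ) * (k : (ZMod (2^m))ˣ) = 1 := hhk
  have h2 : (h : (ZMod (2^m))ˣ) = (k : (ZMod (2^m))ˣ)⁻¹ := by
    rw [eq_inv_iff_mul_eq_one]; exact h1
  have h3 : (h : (ZMod (2^m))ˣ) ∈ zpowers (-1 : (ZMod (2^m))ˣ) ⊓ zpowers (gunit m) := by
    rw [Subgroup.mem_inf]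
    exact ⟨h.2, h2 ▸ inv_mem k.2⟩
  rw [inter_bot m hm, Subgroup.mem_bot] at h3
  have h4 : (k : (ZMod (2^m))ˣ) = 1 := by rw [← inv_inv (k : (ZMod (2^m))ˣ), ← h2, h3, inv_one]
  refine Prod.ext (Subtype.ext ?_) (Subtype.ext ?_)
  · simpa using h3
  · simpa using h4

lemma jhom_range (m : ℕ) :
    (jhom m).range = zpowers (-1 : (ZMod (2^m))ˣ) ⊔ zpowers (gunit m) := by
  apply le_antisymm
  · rintro x ⟨⟨h, k⟩, rfl⟩
    exact mul_mem_sup h.2 k.2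
  · rw [sup_le_iff]
    constructor
    · intro x hx
      exact ⟨(⟨x, hx⟩, 1), by simp [jhom]⟩
    · intro x hx
      exact ⟨(1, ⟨x, hx⟩), by simp [jhom]⟩

noncomputable def joinEquiv (m : ℕ) (hm : 4 ≤ m) :
    ((zpowers (-1 : (ZMod (2^m))ˣ)) × (zpowers (gunit m))) ≃*
      (zpowers (-1 : (ZMod (2^m))ˣ) ⊔ zpowers (gunit m) : Subgroup (ZMod (2^m))ˣ) :=
  (MonoidHom.ofInjective (jhom_inj m hm)).trans (MulEquiv.subgroupCongr (jhom_range m))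

lemma card_join (m : ℕ) (hm : 4 ≤ m) :
    Nat.card (zpowers (-1 : (ZMod (2^m))ˣ) ⊔ zpowers (gunit m) : Subgroup (ZMod (2^m))ˣ)
      = 2^(m-2) := by
  rw [← Nat.card_congr (joinEquiv m hm).toEquiv, Nat.card_prod, Nat.card_zpowers,
    Nat.card_zpowers, orderOf_negone m hm, orderOf_gunit m hm, ← pow_succ']
  congr 1
  omega

lemma join_index (m : ℕ) (hm : 4 ≤ m) :
    (zpowers (-1 : (ZMod (2^m))ˣ) ⊔ zpowers (gunit m)).index = 2 := by
  have h := Subgroup.card_mul_index (zpowers (-1 : (ZMod (2^m))ˣ) ⊔ zpowers (gunit m))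
  rw [card_join m hm, card_units_zmod m (by omega)] at h
  have h2 : (2:ℕ)^(m-1) = 2^(m-2) * 2 := by rw [← pow_succ]; congr 1; omega
  rw [h2] at h
  exact Nat.eq_of_mul_eq_mul_left (by positivity) h

lemma join_eq_W (m : ℕ) (hm : 4 ≤ m) :
    zpowers (-1 : (ZMod (2^m))ˣ) ⊔ zpowers (gunit m) =
      Subgroup.comap
        (ZMod.unitsMap (pow_dvd_pow 2 (le_trans (by norm_num : (3:ℕ) ≤ 4) hm) : (2:ℕ)^3 ∣ 2^m))
        (zpowers (-1 : (ZMod (2^3))ˣ)) := by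
  set ψ := ZMod.unitsMap (pow_dvd_pow 2 (le_trans (by norm_num : (3:ℕ) ≤ 4) hm) : (2:ℕ)^3 ∣ 2^m) with hψ
  have hψneg : ψ (-1) = -1 := by
    ext
    have hrfl : ((ψ (-1) : (ZMod (2^3))ˣ) : ZMod (2^3))
        = ZMod.castHom (pow_dvd_pow 2 (le_trans (by norm_num : (3:ℕ) ≤ 4) hm)) (ZMod (2^3))
          ((-1 : (ZMod (2^m))ˣ) : ZMod (2^m)) := rfl
    rw [hrfl, Units.val_neg, Units.val_one, map_neg, map_one, Units.val_neg, Units.val_one]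
  have hψg : ψ (gunit m) = -1 := by
    ext
    have hrfl : ((ψ (gunit m) : (ZMod (2^3))ˣ) : ZMod (2^3))
        = ZMod.castHom (pow_dvd_pow 2 (le_trans (by norm_num : (3:ℕ) ≤ 4) hm)) (ZMod (2^3))
          ((gunit m : (ZMod (2^m))ˣ) : ZMod (2^m)) := rfl
    rw [hrfl, gunit_val, show (-9 : ZMod (2^m)) = ((-9:ℤ) : ZMod (2^m)) by push_cast; ring,
      map_intCast, Units.val_neg, Units.val_one]
    decide
  have hle : zpowers (-1 : (ZMod (2^m))ˣ) ⊔ zpowers (gunit m) ≤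
      Subgroup.comap ψ (zpowers (-1 : (ZMod (2^3))ˣ)) := by
    rw [sup_le_iff]
    constructor
    · rw [zpowers_le]
      simp only [Subgroup.mem_comap, hψneg]
      exact mem_zpowers _
    · rw [zpowers_le]
      simp only [Subgroup.mem_comap, hψg]
      exact mem_zpowers _
  have hWindex : (Subgroup.comap ψ (zpowers (-1 : (ZMod (2^3))ˣ))).index = 2 := by
    rw [hψ, ZMod.unitsMap_def, Subgroup.index_comap_of_surjective _
      (by rw [← ZMod.unitsMap_def]; exact ZMod.unitsMap_surjective _)]
    have h8 := Subgroup.card_mul_index (zpowers (-1 : (ZMod (2^3))ˣ))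
    rw [card_units_zmod 3 (by norm_num), Nat.card_zpowers] at h8
    have ho : orderOf (-1 : (ZMod (2^3))ˣ) = 2 := by
      refine orderOf_eq_prime ?_ ?_
      · ext; simp
      · intro hcon
        have := congrArg Units.val hcon
        rw [Units.val_neg, Units.val_one] at this
        revert this; decide
    rw [ho] at h8
    omega
  have hJ := join_index m hm
  have hrel := Subgroup.relIndex_mul_index hle
  rw [hWindex, hJ] at hrel
  have : (zpowers (-1 : (ZMod (2^m))ˣ) ⊔ zpowers (gunit m)).relIndex
      (Subgroup.comap ψ (zpowers (-1 : (ZMod (2^3))ˣ))) = 1 := by omega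
  exact le_antisymm hle (Subgroup.relIndex_eq_one.mp this)

lemma isUnit_mk_of_odd_norm (k : ℕ) (x : ℤ√2) (h : Odd x.norm) :
    IsUnit (Ideal.Quotient.mk (Ideal.span {(Zsqrtd.sqrtd : ℤ√2)^k}) x) := by
  obtain ⟨c, hc⟩ := h
  have hcop : IsCoprime (x.norm) ((2:ℤ)^k) :=
    IsCoprime.pow_right ⟨1, -c, by rw [hc]; ring⟩
  obtain ⟨u, v, huv⟩ := hcop
  apply IsUnit.of_mul_eq_one
    (Ideal.Quotient.mk (Ideal.span {(Zsqrtd.sqrtd : ℤ√2)^k}) (star x * (u : ℤ√2)))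
  rw [← map_mul, ← map_one (Ideal.Quotient.mk (Ideal.span {(Zsqrtd.sqrtd : ℤ√2)^k})),
    Ideal.Quotient.eq, Ideal.mem_span_singleton]
  refine ⟨-(v:ℤ√2) * Zsqrtd.sqrtd^k, ?_⟩
  have h1 : x * (star x * (u:ℤ√2)) - 1 = ((x.norm * u - 1 : ℤ) : ℤ√2) := by
    push_cast
    rw [Zsqrtd.norm_eq_mul_conj]
    ring
  have h2 : x.norm * u - 1 = -(v * 2^k) := by linarith
  rw [h1, h2]
  have h3 : ((2:ℤ√2))^k = Zsqrtd.sqrtd^k * Zsqrtd.sqrtd^k := by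
    rw [← mul_pow, Zsqrtd.dmuld]
    norm_num
  push_cast
  rw [h3]
  ring

lemma re_odd_of_isUnit (k : ℕ) (hk : 2 ≤ k) (x : ℤ√2)
    (h : IsUnit (Ideal.Quotient.mk (Ideal.span {(Zsqrtd.sqrtd : ℤ√2)^k}) x)) : Odd x.re := by
  obtain ⟨u, hu⟩ := h
  obtain ⟨y, hy⟩ := Ideal.Quotient.mk_surjective (((u⁻¹ : _ˣ) : (ℤ√2) ⧸ Ideal.span {(Zsqrtd.sqrtd : ℤ√2)^k}))
  have hxy : (Ideal.Quotient.mk (Ideal.span {(Zsqrtd.sqrtd : ℤ√2)^k})) (x * y) =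
      (Ideal.Quotient.mk (Ideal.span {(Zsqrtd.sqrtd : ℤ√2)^k})) 1 := by
    rw [map_mul, hy, ← hu, map_one]
    exact u.mul_inv
  rw [Ideal.Quotient.eq, Ideal.mem_span_singleton] at hxy
  obtain ⟨z, hz⟩ := hxy
  have h2 : (Zsqrtd.sqrtd : ℤ√2)^k = 2 * Zsqrtd.sqrtd^(k-2) := by
    conv_lhs => rw [show k = 2 + (k - 2) by omega, pow_add, sq, Zsqrtd.dmuld]
    norm_num
  set A := Zsqrtd.sqrtd^(k-2) * z with hA
  rw [h2, mul_assoc, ← hA] at hz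
  have hre := congrArg Zsqrtd.re hz
  simp only [Zsqrtd.re_sub, Zsqrtd.re_mul, Zsqrtd.re_one, Zsqrtd.re_ofNat, Zsqrtd.im_ofNat] at hre
  push_cast at hre
  have hodd : Odd (x.re * y.re) := ⟨A.re - x.im * y.im, by linarith⟩
  exact (Int.odd_mul.mp hodd).1

lemma norm_mod8 (x : ℤ√2) (h : Odd x.re) :
    ((x.norm : ZMod (2^3)) = 1 ∨ (x.norm : ZMod (2^3)) = -1) := by
  obtain ⟨c, hc⟩ := h
  have key : ∀ a b : ZMod (2^3),
      (2*a+1)*(2*a+1) - 2*(b*b) = 1 ∨ (2*a+1)*(2*a+1) - 2*(b*b) = -1 := by decide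
  have hnorm : x.norm = (2*c+1)*(2*c+1) - 2*(x.im*x.im) := by
    rw [Zsqrtd.norm_def, hc]; ring
  rw [hnorm]
  push_cast
  exact key (c : ZMod (2^3)) (x.im : ZMod (2^3))



/-- For `k ≥ 7`, the set
`U_k = { N(x) mod 2^⌈k/2⌉ : x ∈ ℤ[√2], x a unit mod (√2)^k }` is a subgroup of
`(ℤ/2^⌈k/2⌉ℤ)ˣ`; it is the internal direct product of the cyclic subgroup generated by
the class of `-1` (of order 2) and the cyclic subgroup generated by the class of `-9`
(of order `2^⌊(k-5)/2⌋`); in particular `U_k ≃ ℤ/2 × ℤ/2^⌊(k-5)/2⌋`. -/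
theorem stmt_15 (k : ℕ) (hk : 7 ≤ k) :
    ∃ U : Subgroup (ZMod (2 ^ ((k + 1) / 2)))ˣ,
      (∀ v : (ZMod (2 ^ ((k + 1) / 2)))ˣ,
        v ∈ U ↔ ∃ x : Zsqrtd 2,
          IsUnit (Ideal.Quotient.mk (Ideal.span {(Zsqrtd.sqrtd : Zsqrtd 2) ^ k}) x) ∧
          (Zsqrtd.norm x : ZMod (2 ^ ((k + 1) / 2))) = (v : ZMod (2 ^ ((k + 1) / 2)))) ∧
      ∃ g : (ZMod (2 ^ ((k + 1) / 2)))ˣ, (g : ZMod (2 ^ ((k + 1) / 2))) = -9 ∧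
        Nat.card (Subgroup.zpowers (-1 : (ZMod (2 ^ ((k + 1) / 2)))ˣ)) = 2 ∧
        Nat.card (Subgroup.zpowers g) = 2 ^ ((k - 5) / 2) ∧
        Subgroup.zpowers (-1 : (ZMod (2 ^ ((k + 1) / 2)))ˣ) ⊓ Subgroup.zpowers g = ⊥ ∧
        Subgroup.zpowers (-1 : (ZMod (2 ^ ((k + 1) / 2)))ˣ) ⊔ Subgroup.zpowers g = U ∧
        Nonempty (U ≃* Multiplicative (ZMod 2) × Multiplicative (ZMod (2 ^ ((k - 5) / 2)))) := by
  set m := (k + 1) / 2 with hmdef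
  have hm : 4 ≤ m := by omega
  have he : (k - 5) / 2 = m - 3 := by omega
  haveI : NeZero ((2:ℕ)^m) := ⟨by positivity⟩
  refine ⟨zpowers (-1 : (ZMod (2^m))ˣ) ⊔ zpowers (gunit m), ?_, gunit m, gunit_val m, ?_, ?_,
    inter_bot m hm, rfl, ?_⟩
  · -- membership
    intro v
    constructor
    · intro hv
      rw [Subgroup.mem_sup] at hv
      obtain ⟨h, hh, w, hw, hmul⟩ := hv
      rw [← (isOfFinOrder_of_finite _).mem_powers_iff_mem_zpowers,
        Submonoid.mem_powers_iff] at hh hw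
      obtain ⟨a, ha⟩ := hh
      obtain ⟨b, hb⟩ := hw
      refine ⟨(⟨1,1⟩ : ℤ√2)^a * (⟨3,3⟩ : ℤ√2)^b, ?_, ?_⟩
      · apply isUnit_mk_of_odd_norm
        have hn : ((⟨1,1⟩ : ℤ√2)^a * (⟨3,3⟩ : ℤ√2)^b).norm = (-1)^a * (-9)^b := by
          rw [Zsqrtd.norm_mul, norm_pow', norm_pow']
          norm_num [Zsqrtd.norm_def]
        rw [hn]
        exact Int.odd_mul.mpr ⟨(by decide : Odd (-1:ℤ)).pow, (by decide : Odd (-9:ℤ)).pow⟩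
      · have hn : ((⟨1,1⟩ : ℤ√2)^a * (⟨3,3⟩ : ℤ√2)^b).norm = (-1)^a * (-9)^b := by
          rw [Zsqrtd.norm_mul, norm_pow', norm_pow']
          norm_num [Zsqrtd.norm_def]
        rw [hn, ← hmul]
        have hha : ((h : (ZMod (2^m))ˣ) : ZMod (2^m)) = (-1)^a := by
          rw [← ha, Units.val_pow_eq_pow_val, Units.val_neg, Units.val_one]
        have hwb : ((w : (ZMod (2^m))ˣ) : ZMod (2^m)) = (-9)^b := by
          rw [← hb, Units.val_pow_eq_pow_val, gunit_val]
        rw [Units.val_mul, hha, hwb]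
        push_cast
        ring
    · rintro ⟨x, hxu, hxn⟩
      rw [join_eq_W m hm, Subgroup.mem_comap]
      have hodd : Odd x.re := re_odd_of_isUnit k (by omega) x hxu
      have hval : ((ZMod.unitsMap (pow_dvd_pow 2 (le_trans (by norm_num : (3:ℕ) ≤ 4) hm) :
            (2:ℕ)^3 ∣ 2^m) v : (ZMod (2^3))ˣ) : ZMod (2^3)) = ((x.norm : ℤ) : ZMod (2^3)) := by
        have hrfl : ((ZMod.unitsMap (pow_dvd_pow 2 (le_trans (by norm_num : (3:ℕ) ≤ 4) hm) :
              (2:ℕ)^3 ∣ 2^m) v : (ZMod (2^3))ˣ) : ZMod (2^3))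
            = ZMod.castHom (pow_dvd_pow 2 (le_trans (by norm_num : (3:ℕ) ≤ 4) hm)) (ZMod (2^3))
              ((v : (ZMod (2^m))ˣ) : ZMod (2^m)) := rfl
        rw [hrfl, ← hxn, map_intCast]
      rcases norm_mod8 x hodd with h1 | h1
      · have : ZMod.unitsMap (pow_dvd_pow 2 (le_trans (by norm_num : (3:ℕ) ≤ 4) hm) :
            (2:ℕ)^3 ∣ 2^m) v = 1 := by
          ext; rw [hval, h1, Units.val_one]
        rw [this]
        exact one_mem _
      · have : ZMod.unitsMap (pow_dvd_pow 2 (le_trans (by norm_num : (3:ℕ) ≤ 4) hm) :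
            (2:ℕ)^3 ∣ 2^m) v = -1 := by
          ext; rw [hval, h1, Units.val_neg, Units.val_one]
        rw [this]
        exact mem_zpowers _
  · rw [Nat.card_zpowers, orderOf_negone m hm]
  · rw [Nat.card_zpowers, orderOf_gunit m hm, he]
  · have c1 : Nat.card (zpowers (-1 : (ZMod (2^m))ˣ)) = 2 := by
      rw [Nat.card_zpowers, orderOf_negone m hm]
    have c2 : Nat.card (zpowers (gunit m)) = 2^((k-5)/2) := by
      rw [Nat.card_zpowers, orderOf_gunit m hm, he]
    exact ⟨(joinEquiv m hm).symm.trans (MulEquiv.prodCongr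
      ((c1 ▸ zmodCyclicMulEquiv (_root_.isCyclic_zpowers _)).symm)
      ((c2 ▸ zmodCyclicMulEquiv (_root_.isCyclic_zpowers _)).symm))⟩
end
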